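/- Let α ≥ 1 be a natural number, let x_i ∈ ℝ, and let f, Q : ℝ → ℝ be functions of class C^(α+2) such that the iterated derivatives of f of all orders j with 0 ≤ j ≤ α − 1 vanish at x_i (i.e., f has a zero of multiplicity at least α at x_i). Define Φ(x) = (α + 1)·((x − x_i)·f'(x) − α·f(x))·Q(x) − (x − x_i)·f(x)·Q'(x). Then the (α+1)-st iterated derivative of Φ at x_i satisfies Φ^(α+1)(x_i) = (α + 1)·( f^(α+1)(x_i)·Q(x_i) − f^(α)(x_i)·Q'(x_i) ). In particular, if Q(x_i) = f^(α)(x_i) and Q'(x_i) = f^(α+1)(x_i), then Φ^(α+1)(x_i) = 0. -/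

import Mathlib

private lemma itconst (n : ℕ) (c : ℝ) : iteratedDeriv (n + 1) (fun _ : ℝ => c) = fun _ => 0 := by
  induction n generalizing c with
  | zero => simp [iteratedDeriv_one]
  | succ n ih => rw [iteratedDeriv_succ', deriv_const']; exact ih 0

private lemma itSub (n : ℕ) (F G : ℝ → ℝ) (hF : ContDiff ℝ n F) (hG : ContDiff ℝ n G) (x : ℝ) :
    iteratedDeriv n (fun y => F y - G y) x = iteratedDeriv n F x - iteratedDeriv n G x := by
  have : (fun y => F y - G y) = F - G := rfl
  rw [this]
  simp only [← iteratedDerivWithin_univ]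
  exact iteratedDerivWithin_sub (Set.mem_univ x) uniqueDiffOn_univ
    hF.contDiffWithinAt hG.contDiffWithinAt

private lemma itCMul (n : ℕ) (c : ℝ) (F : ℝ → ℝ) (hF : ContDiff ℝ n F) (x : ℝ) :
    iteratedDeriv n (fun y => c * F y) x = c * iteratedDeriv n F x := by
  simp only [← iteratedDerivWithin_univ]
  exact iteratedDerivWithin_const_mul (Set.mem_univ x) uniqueDiffOn_univ c hF.contDiffWithinAt

private lemma leibniz (n : ℕ) (u v : ℝ → ℝ) (hu : ContDiff ℝ n u) (hv : ContDiff ℝ n v) :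
    iteratedDeriv n (fun x => u x * v x) = fun x =>
      ∑ k ∈ Finset.range (n + 1),
        (n.choose k : ℝ) * iteratedDeriv k u x * iteratedDeriv (n - k) v x := by
  induction n with
  | zero => simp
  | succ n ih =>
    funext x
    have hu' : ContDiff ℝ n u := hu.of_le (by exact_mod_cast Nat.le_succ n)
    have hv' : ContDiff ℝ n v := hv.of_le (by exact_mod_cast Nat.le_succ n)
    have du : ∀ k : ℕ, k ≤ n → DifferentiableAt ℝ (iteratedDeriv k u) x := fun k hk =>
      (hu.differentiable_iteratedDeriv k (by exact_mod_cast Nat.lt_succ_of_le hk)).differentiableAt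
    have dv : ∀ k : ℕ, k ≤ n → DifferentiableAt ℝ (iteratedDeriv k v) x := fun k hk =>
      (hv.differentiable_iteratedDeriv k (by exact_mod_cast Nat.lt_succ_of_le hk)).differentiableAt
    rw [iteratedDeriv_succ, ih hu' hv']
    rw [deriv_fun_sum (fun k hk => by
      have hk' : k ≤ n := Nat.lt_succ_iff.mp (Finset.mem_range.mp hk)
      exact (((du k hk').const_mul _).fun_mul (dv (n - k) (Nat.sub_le n k))))]
    have step : ∀ k ∈ Finset.range (n + 1),
        deriv (fun y => (n.choose k : ℝ) * iteratedDeriv k u y * iteratedDeriv (n - k) v y) x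
          = (n.choose k : ℝ) * iteratedDeriv (k + 1) u x * iteratedDeriv (n - k) v x
            + (n.choose k : ℝ) * iteratedDeriv k u x * iteratedDeriv (n + 1 - k) v x := by
      intro k hk
      have hk' : k ≤ n := Nat.lt_succ_iff.mp (Finset.mem_range.mp hk)
      rw [deriv_fun_mul ((du k hk').const_mul _) (dv (n - k) (Nat.sub_le n k)),
        deriv_const_mul _ (du k hk')]
      have e1 : deriv (iteratedDeriv k u) x = iteratedDeriv (k + 1) u x := by
        rw [iteratedDeriv_succ]
      have e2 : deriv (iteratedDeriv (n - k) v) x = iteratedDeriv (n + 1 - k) v x := by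
        rw [show n + 1 - k = (n - k) + 1 by omega, iteratedDeriv_succ]
      rw [e1, e2]
    rw [Finset.sum_congr rfl step, Finset.sum_add_distrib]
    -- now the binomial bookkeeping
    rw [Finset.sum_range_succ' (fun k =>
      ((n + 1).choose k : ℝ) * iteratedDeriv k u x * iteratedDeriv (n + 1 - k) v x) (n + 1)]
    have pascal : ∀ k ∈ Finset.range (n + 1),
        (((n + 1).choose (k + 1) : ℝ) * iteratedDeriv (k + 1) u x
            * iteratedDeriv (n + 1 - (k + 1)) v x)
          = (n.choose k : ℝ) * iteratedDeriv (k + 1) u x * iteratedDeriv (n - k) v x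
            + (n.choose (k + 1) : ℝ) * iteratedDeriv (k + 1) u x * iteratedDeriv (n - k) v x := by
      intro k _
      rw [show n + 1 - (k + 1) = n - k by omega, Nat.choose_succ_succ]
      push_cast; ring
    rw [Finset.sum_congr rfl pascal, Finset.sum_add_distrib]
    have second : ∑ k ∈ Finset.range (n + 1),
        (n.choose (k + 1) : ℝ) * iteratedDeriv (k + 1) u x * iteratedDeriv (n - k) v x
          + ((n + 1).choose 0 : ℝ) * iteratedDeriv 0 u x * iteratedDeriv (n + 1 - 0) v x
        = ∑ k ∈ Finset.range (n + 1),
            (n.choose k : ℝ) * iteratedDeriv k u x * iteratedDeriv (n + 1 - k) v x := by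
      rw [Finset.sum_range_succ (fun k =>
        (n.choose (k + 1) : ℝ) * iteratedDeriv (k + 1) u x * iteratedDeriv (n - k) v x) n]
      rw [Finset.sum_range_succ' (fun k =>
        (n.choose k : ℝ) * iteratedDeriv k u x * iteratedDeriv (n + 1 - k) v x) n]
      simp only [Nat.choose_succ_self, Nat.cast_zero, zero_mul, add_zero, Nat.choose_zero_right,
        Nat.cast_one, one_mul, Nat.sub_zero]
      congr 1
      refine Finset.sum_congr rfl fun k hk => ?_
      have : k < n := Finset.mem_range.mp hk
      rw [show n + 1 - (k + 1) = n - k by omega]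
    rw [add_assoc, second]

/-- `D^n ((x - xi) * v)(xi) = n * D^(n-1) v (xi)` for `n ≥ 1`. -/
private lemma key (n : ℕ) (hn : 1 ≤ n) (xi : ℝ) (v : ℝ → ℝ) (hv : ContDiff ℝ n v) :
    iteratedDeriv n (fun x => (x - xi) * v x) xi = n * iteratedDeriv (n - 1) v xi := by
  have hu : ContDiff ℝ n (fun x : ℝ => x - xi) := contDiff_id.sub contDiff_const
  rw [congrFun (leibniz n _ v hu hv) xi]
  rw [Finset.sum_eq_single 1]
  · rw [iteratedDeriv_one]
    have : deriv (fun x : ℝ => x - xi) = fun _ => (1 : ℝ) := by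
      funext y; simp
    rw [this, Nat.choose_one_right]
    simp
  · intro k hk hk1
    rcases Nat.eq_zero_or_pos k with h0 | hpos
    · subst h0; simp [iteratedDeriv_zero]
    · have h2 : 2 ≤ k := by omega
      obtain ⟨m, rfl⟩ : ∃ m, k = m + 2 := ⟨k - 2, by omega⟩
      have : iteratedDeriv (m + 2) (fun x : ℝ => x - xi) = fun _ => 0 := by
        rw [iteratedDeriv_succ']
        have : deriv (fun x : ℝ => x - xi) = fun _ => (1 : ℝ) := by funext y; simp
        rw [this, itconst]
      rw [this]; simp
  · intro h; exact absurd (Finset.mem_range.mpr (by omega)) h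

/-- If all derivatives of `u` up to order `n-1` vanish at `xi`, then
`D^n (u*v)(xi) = D^n u (xi) * v(xi)`. -/
private lemma prod_vanish (n : ℕ) (xi : ℝ) (u v : ℝ → ℝ)
    (hu : ContDiff ℝ n u) (hv : ContDiff ℝ n v)
    (h0 : ∀ k, k < n → iteratedDeriv k u xi = 0) :
    iteratedDeriv n (fun x => u x * v x) xi = iteratedDeriv n u xi * v xi := by
  rw [congrFun (leibniz n u v hu hv) xi]
  rw [Finset.sum_eq_single n]
  · simp
  · intro k hk hkn
    have hk' := Finset.mem_range.mp hk
    have : k < n := by omega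
    rw [h0 k this]; ring
  · intro h; exact absurd (Finset.mem_range.mpr (by omega)) h

/-- Claim (8) of the paper, made precise: the `(α+1)`-st derivative of the numerator
function `Φ` of (6) at `x_i`, and its vanishing when `Q` matches `f^(α)` to first
order at `x_i`. -/
theorem obreshkoff_ehrlich_Phi_leading_derivative
    (α : ℕ) (hα : 1 ≤ α) (xi : ℝ) (f Q : ℝ → ℝ)
    (hf : ContDiff ℝ (α + 2) f) (hQ : ContDiff ℝ (α + 2) Q)
    (hzero : ∀ j, j ≤ α - 1 → iteratedDeriv j f xi = 0)
    (Φ : ℝ → ℝ)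
    (hΦ : Φ = fun x => ((α : ℝ) + 1) * ((x - xi) * deriv f x - (α : ℝ) * f x) * Q x
        - (x - xi) * f x * deriv Q x) :
    iteratedDeriv (α + 1) Φ xi
        = ((α : ℝ) + 1) * (iteratedDeriv (α + 1) f xi * Q xi
            - iteratedDeriv α f xi * deriv Q xi) ∧
      (Q xi = iteratedDeriv α f xi → deriv Q xi = iteratedDeriv (α + 1) f xi →
        iteratedDeriv (α + 1) Φ xi = 0) := by
  have hzero' : ∀ j, j < α → iteratedDeriv j f xi = 0 := fun j hj => hzero j (by omega)
  -- basic smoothness facts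
  have hf2 : ContDiff ℝ ((α + 1 : ℕ) + 1) f := by
    have : ((α : WithTop ℕ∞) + 2) = ((α + 1 : ℕ) : WithTop ℕ∞) + 1 := by push_cast; ring
    rw [← this]; exact hf
  have hQ2 : ContDiff ℝ ((α + 1 : ℕ) + 1) Q := by
    have : ((α : WithTop ℕ∞) + 2) = ((α + 1 : ℕ) : WithTop ℕ∞) + 1 := by push_cast; ring
    rw [← this]; exact hQ
  have hf' : ContDiff ℝ (α + 1 : ℕ) (deriv f) := (contDiff_succ_iff_deriv.mp hf2).2.2
  have hQ' : ContDiff ℝ (α + 1 : ℕ) (deriv Q) := (contDiff_succ_iff_deriv.mp hQ2).2.2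
  have hf1 : ContDiff ℝ (α + 1 : ℕ) f := hf2.of_le (by exact_mod_cast Nat.le_succ _)
  have hQ1 : ContDiff ℝ (α + 1 : ℕ) Q := hQ2.of_le (by exact_mod_cast Nat.le_succ _)
  set g : ℝ → ℝ := fun x => (x - xi) * deriv f x - (α : ℝ) * f x with hg_def
  set h : ℝ → ℝ := fun x => (x - xi) * f x with hh_def
  have hsub : ContDiff ℝ (α + 1 : ℕ) (fun x : ℝ => x - xi) := contDiff_id.sub contDiff_const
  have hg : ContDiff ℝ (α + 1 : ℕ) g := (hsub.mul hf').sub (contDiff_const.mul hf1)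
  have hh : ContDiff ℝ (α + 1 : ℕ) h := hsub.mul hf1
  -- derivatives of g at xi vanish up to order α
  have hDf : ∀ k, 1 ≤ k → k ≤ α + 1 →
      iteratedDeriv k (fun x => (x - xi) * deriv f x) xi = k * iteratedDeriv k f xi := by
    intro k hk1 hk2
    rw [key k hk1 xi (deriv f) (hf'.of_le (by exact_mod_cast hk2))]
    congr 1
    rw [show k = (k - 1) + 1 by omega, iteratedDeriv_succ']
    simp [show k - 1 + 1 - 1 = k - 1 by omega]
  have hgk : ∀ k, k ≤ α + 1 → iteratedDeriv k g xi = ((k : ℝ) - α) * iteratedDeriv k f xi := by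
    intro k hk
    have hk' : ContDiff ℝ (k : ℕ) (fun x : ℝ => (x - xi) * deriv f x) :=
      (hsub.mul hf').of_le (by exact_mod_cast hk)
    have hk'' : ContDiff ℝ (k : ℕ) (fun x : ℝ => (α : ℝ) * f x) :=
      (contDiff_const.mul hf1).of_le (by exact_mod_cast hk)
    rw [hg_def]
    rw [itSub k _ _ hk' hk'' xi, itCMul k _ f (hf1.of_le (by exact_mod_cast hk)) xi]
    rcases Nat.eq_zero_or_pos k with rfl | hpos
    · simp [iteratedDeriv_zero]
    · rw [hDf k hpos hk]; ring
  have hg0 : ∀ k, k < α + 1 → iteratedDeriv k g xi = 0 := by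
    intro k hk
    rw [hgk k (by omega)]
    rcases eq_or_lt_of_le (Nat.lt_succ_iff.mp hk) with rfl | hlt
    · simp
    · rw [hzero' k hlt]; ring
  have hgtop : iteratedDeriv (α + 1) g xi = iteratedDeriv (α + 1) f xi := by
    rw [hgk (α + 1) le_rfl]; push_cast; ring
  -- derivatives of h at xi vanish up to order α
  have hh0 : ∀ k, k < α + 1 → iteratedDeriv k h xi = 0 := by
    intro k hk
    rcases Nat.eq_zero_or_pos k with rfl | hpos
    · simp [hh_def, iteratedDeriv_zero]
    · rw [hh_def, key k hpos xi f (hf1.of_le (by exact_mod_cast Nat.le_of_lt hk))]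
      rw [hzero' (k - 1) (by omega)]; ring
  have hhtop : iteratedDeriv (α + 1) h xi = ((α : ℝ) + 1) * iteratedDeriv α f xi := by
    rw [hh_def, key (α + 1) (by omega) xi f hf1]
    push_cast
    simp
  -- products
  have hA : iteratedDeriv (α + 1) (fun x => g x * Q x) xi
      = iteratedDeriv (α + 1) f xi * Q xi := by
    rw [prod_vanish (α + 1) xi g Q hg hQ1 hg0, hgtop]
  have hB : iteratedDeriv (α + 1) (fun x => h x * deriv Q x) xi
      = ((α : ℝ) + 1) * iteratedDeriv α f xi * deriv Q xi := by
    rw [prod_vanish (α + 1) xi h (deriv Q) hh hQ' hh0, hhtop]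
  -- assemble Φ
  have hΦeq : Φ = fun x => ((α : ℝ) + 1) * (g x * Q x) - h x * deriv Q x := by
    rw [hΦ]; funext x; rw [hg_def, hh_def]; ring
  have hmain : iteratedDeriv (α + 1) Φ xi
      = ((α : ℝ) + 1) * (iteratedDeriv (α + 1) f xi * Q xi
          - iteratedDeriv α f xi * deriv Q xi) := by
    rw [hΦeq]
    rw [itSub (α + 1) _ _ (contDiff_const.mul (hg.mul hQ1)) (hh.mul hQ') xi]
    rw [itCMul (α + 1) _ _ (hg.mul hQ1) xi, hA, hB]
    ring
  refine ⟨hmain, fun h1 h2 => ?_⟩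
  rw [hmain, h1, h2]; ring
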